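/- Let 2 ≤ i ≤ d, 1 ≤ l ≤ i−1, a ≥ 0, and l + a ≤ j ≤ d. Assume that for every k with l ≤ k ≤ i−1 and i ≤ k+l+a ≤ d, the binomial coefficient C(k,l) is even. Let τ ∈ S_{i+1} be the cyclic permutation (0 1 ⋯ i) and define, in A^{⊗(i+1)}: v := Σ_{k=l}^{i−1} C(k,l)·( h_{k+l+a} ⊗ sym_{S_i}( (⊗_{s=0, s≠k}^{i−1} h_s) ⊗ l_j ) ) + l_{j−l−a} ⊗ sym_{S_i}( ⊗_{t=0}^{i−1} h_t ), where h_t := 0 for t > d and binomial coefficients are taken mod 2. Then Σ_{r=0}^{i} τ^r·v = sym_{S_{i+1}}( h_0 ⊗ ⋯ ⊗ h_{i−1} ⊗ l_{j−l−a} ) = ρ_{i, j−l−a}. -/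

import Mathlib

open PiTensorProduct TensorProduct

lemma finRotate_pow_apply_zero (n r : ℕ) (hr : r < n + 1) :
    ((finRotate (n+1)) ^ r) 0 = ⟨r, hr⟩ := by
  induction r with
  | zero => simp
  | succ r ih =>
    rw [pow_succ', Equiv.Perm.mul_apply, ih (by omega), finRotate_succ_apply]
    ext
    simp [Fin.val_add, Nat.mod_eq_of_lt (by omega : r + 1 < n + 1)]

lemma sum_rot {M : Type*} [AddCommMonoid M] (n : ℕ) (G : Equiv.Perm (Fin (n+1)) → M) :
    ∑ r ∈ Finset.range (n+1), ∑ σ ∈ Finset.univ.filter (fun σ : Equiv.Perm (Fin (n+1)) => σ 0 = 0),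
      G (σ * ((finRotate (n+1)) ^ r)⁻¹) = ∑ π : Equiv.Perm (Fin (n+1)), G π := by
  rw [← Finset.sum_product']
  refine Finset.sum_nbij' (fun p => p.2 * ((finRotate (n+1)) ^ p.1)⁻¹)
    (fun π => (((π⁻¹ 0 : Fin (n+1)) : ℕ), π * (finRotate (n+1)) ^ (((π⁻¹ 0 : Fin (n+1)) : ℕ))))
    ?_ ?_ ?_ ?_ ?_
  · intro p _; exact Finset.mem_univ _
  · intro π _
    simp only [Finset.mem_product, Finset.mem_range, Finset.mem_filter, Finset.mem_univ, true_and]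
    refine ⟨(π⁻¹ 0).isLt, ?_⟩
    rw [Equiv.Perm.mul_apply, finRotate_pow_apply_zero _ _ (π⁻¹ 0).isLt]
    simp
  · rintro ⟨r, σ⟩ hmem
    simp only [Finset.mem_product, Finset.mem_range, Finset.mem_filter, Finset.mem_univ,
      true_and] at hmem
    obtain ⟨hr, hσ⟩ := hmem
    have h0 : (σ * ((finRotate (n+1)) ^ r)⁻¹)⁻¹ 0 = ⟨r, hr⟩ := by
      rw [mul_inv_rev, inv_inv, Equiv.Perm.mul_apply]
      have : σ⁻¹ 0 = 0 := by conv_lhs => rw [← hσ, Equiv.Perm.inv_def, Equiv.symm_apply_apply]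
      rw [this, finRotate_pow_apply_zero _ _ hr]
    simp only [h0, Prod.mk.injEq]
    exact ⟨trivial, by group⟩
  · intro π _
    simp only
    group
  · intro p _; rfl

lemma sum_perm_zero {M : Type*} [AddCommGroup M] [Module (ZMod 2) M] {n : ℕ}
    (G : Equiv.Perm (Fin n) → M) (σ0 : Equiv.Perm (Fin n)) (h1 : σ0 ≠ 1)
    (h2 : σ0 * σ0 = 1) (hG : ∀ π, G (σ0 * π) = G π) :
    ∑ π : Equiv.Perm (Fin n), G π = 0 := by
  refine Finset.sum_involution (fun π _ => σ0 * π) ?_ ?_ (fun _ _ => Finset.mem_univ _) ?_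
  · intro π _
    rw [hG]
    have h3 : G π + G π = ((1 : ZMod 2) + 1) • G π := by rw [add_smul, one_smul]
    have h20 : (1 : ZMod 2) + 1 = 0 := by decide
    rw [h3, h20, zero_smul]
  · intro π _ _ hc
    beta_reduce at hc
    apply h1
    have : σ0 * π * π⁻¹ = π * π⁻¹ := by rw [hc]
    simpa [mul_assoc] using this
  · intro π _
    simp only [← mul_assoc, h2, one_mul]

lemma sum_perm_relabel {M : Type*} [AddCommMonoid M] {n : ℕ}
    (G : Equiv.Perm (Fin n) → M) (c : Equiv.Perm (Fin n)) :
    ∑ π : Equiv.Perm (Fin n), G (c * π) = ∑ π : Equiv.Perm (Fin n), G π :=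
  Fintype.sum_bijective (c * ·) (Group.mulLeft_bijective c) _ _ (fun _ => rfl)

/-- The permutation action of `Equiv.Perm (Fin m)` on the `m`-fold tensor power over `𝔽₂`,
permuting the tensor factors. -/
noncomputable def permAct (A : Type) [AddCommGroup A] [Module (ZMod 2) A]
    (m : ℕ) (s : Equiv.Perm (Fin m)) :
    (⨂[ZMod 2] _ : Fin m, A) →ₗ[ZMod 2] ⨂[ZMod 2] _ : Fin m, A :=
  (PiTensorProduct.reindex (ZMod 2) (fun _ : Fin m => A) s).toLinearMap

lemma permAct_tprod (A : Type) [AddCommGroup A] [Module (ZMod 2) A]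
    (m : ℕ) (s : Equiv.Perm (Fin m)) (v : Fin m → A) :
    permAct A m s (⨂ₜ[ZMod 2] t, v t) = ⨂ₜ[ZMod 2] t, v (s⁻¹ t) := by
  rw [permAct, LinearEquiv.coe_toLinearMap, PiTensorProduct.reindex_tprod]
  rfl

lemma fin_sub_one_val {n : ℕ} (hn : 0 < n) (u : Fin (n+1)) :
    ((u - 1 : Fin (n+1)) : ℕ) = if u.val = 0 then n else u.val - 1 := by
  have h1 : ((1 : Fin (n+1)) : ℕ) = 1 := by
    simp [Fin.val_one', Nat.mod_eq_of_lt (by omega : 1 < n + 1)]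
  rw [Fin.sub_def, h1]
  simp only [Fin.val_mk]
  have hu := u.isLt
  rcases Nat.eq_zero_or_pos u.val with h0 | hpos
  · rw [if_pos h0, h0]
    have : n + 1 - 1 + 0 = n := by omega
    rw [this, Nat.mod_eq_of_lt (by omega)]
  · rw [if_neg (by omega)]
    have : n + 1 - 1 + u.val = (n + 1) + (u.val - 1) := by omega
    rw [this, Nat.add_mod_left, Nat.mod_eq_of_lt (by omega)]

theorem cyclic_sum_of_v_eq_rho (d : ℕ) (hd : 2 ≤ d)
    (A : Type) [AddCommGroup A] [Module (ZMod 2) A]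
    (h l : ℕ → A)
    (hhtop : ∀ t : ℕ, d < t → h t = 0)
    (i L a : ℕ) (hi2 : 2 ≤ i) (hid : i ≤ d) (hL1 : 1 ≤ L) (hLi : L ≤ i - 1)
    (j : ℕ) (hLaj : L + a ≤ j) (hjd : j ≤ d)
    (hpar : ∀ k : ℕ, L ≤ k → k ≤ i - 1 → i ≤ k + L + a → k + L + a ≤ d →
      Even (Nat.choose k L)) :
    ∑ r ∈ Finset.range (i+1),
      permAct A (i+1) ((finRotate (i+1)) ^ r)
        ((∑ k ∈ Finset.Icc L (i-1), (Nat.choose k L : ZMod 2) •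
            ∑ τ ∈ Finset.univ.filter (fun τ : Equiv.Perm (Fin (i+1)) => τ 0 = 0),
              ⨂ₜ[ZMod 2] t : Fin (i+1),
                (fun u : Fin (i+1) =>
                  if u.val = 0 then h (k + L + a)
                  else if u.val - 1 < i - 1 then
                    (if u.val - 1 < k then h (u.val - 1) else h u.val)
                  else l j) (τ t)) +
          ∑ τ ∈ Finset.univ.filter (fun τ : Equiv.Perm (Fin (i+1)) => τ 0 = 0),
            ⨂ₜ[ZMod 2] t : Fin (i+1),
              (fun u : Fin (i+1) =>
                if u.val = 0 then l (j - L - a) else h (u.val - 1)) (τ t)) =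
      ∑ s : Equiv.Perm (Fin (i+1)),
        ⨂ₜ[ZMod 2] t : Fin (i+1),
          (fun u : Fin (i+1) =>
            if u.val = i then l (j - L - a) else h u.val) (s t) := by
  classical
  set fk : ℕ → Fin (i+1) → A := fun k u =>
    if u.val = 0 then h (k + L + a)
    else if u.val - 1 < i - 1 then (if u.val - 1 < k then h (u.val - 1) else h u.val)
    else l j with hfk
  set g : Fin (i+1) → A := fun u =>
    if u.val = 0 then l (j - L - a) else h (u.val - 1) with hg
  set w : Fin (i+1) → A := fun u =>
    if u.val = i then l (j - L - a) else h u.val with hw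
  have Hmain : ∀ (F : Fin (i+1) → A),
      ∑ r ∈ Finset.range (i+1),
        ∑ σ ∈ Finset.univ.filter (fun σ : Equiv.Perm (Fin (i+1)) => σ 0 = 0),
          (⨂ₜ[ZMod 2] t, F (σ (((finRotate (i+1)) ^ r)⁻¹ t)))
      = ∑ π : Equiv.Perm (Fin (i+1)), ⨂ₜ[ZMod 2] t, F (π t) := by
    intro F
    exact sum_rot (M := ⨂[ZMod 2] _ : Fin (i+1), A) i
      (fun π => ⨂ₜ[ZMod 2] t, F (π t))
  have step1 :
      (∑ r ∈ Finset.range (i+1),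
        permAct A (i+1) ((finRotate (i+1)) ^ r)
          ((∑ k ∈ Finset.Icc L (i-1), (Nat.choose k L : ZMod 2) •
              ∑ σ ∈ Finset.univ.filter (fun σ : Equiv.Perm (Fin (i+1)) => σ 0 = 0),
                ⨂ₜ[ZMod 2] t : Fin (i+1), fk k (σ t)) +
            ∑ σ ∈ Finset.univ.filter (fun σ : Equiv.Perm (Fin (i+1)) => σ 0 = 0),
              ⨂ₜ[ZMod 2] t : Fin (i+1), g (σ t)))
      = (∑ k ∈ Finset.Icc L (i-1), (Nat.choose k L : ZMod 2) •
          ∑ π : Equiv.Perm (Fin (i+1)), ⨂ₜ[ZMod 2] t, fk k (π t)) +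
        ∑ π : Equiv.Perm (Fin (i+1)), ⨂ₜ[ZMod 2] t, g (π t) := by
    simp only [map_add, map_sum, map_smul, permAct_tprod]
    rw [Finset.sum_add_distrib]
    congr 1
    · rw [Finset.sum_comm]
      refine Finset.sum_congr rfl fun k _ => ?_
      rw [← Finset.smul_sum]
      congr 1
      exact Hmain (fk k)
    · exact Hmain g
  have hk0 : ∀ k ∈ Finset.Icc L (i-1), (Nat.choose k L : ZMod 2) •
      (∑ π : Equiv.Perm (Fin (i+1)), ⨂ₜ[ZMod 2] t, fk k (π t)) = 0 := by
    intro k hk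
    rw [Finset.mem_Icc] at hk
    obtain ⟨hkL, hki⟩ := hk
    set b : ℕ := k + L + a with hb
    have hbk : b ≠ k := by omega
    have hkey : ∀ q : Fin (i+1), q ≠ 0 → fk k q = h b →
        (∑ π : Equiv.Perm (Fin (i+1)), ⨂ₜ[ZMod 2] t, fk k (π t)) = 0 := by
      intro q hq0 hfkq
      have hfk0 : fk k 0 = h b := by simp [hfk, hb]
      refine sum_perm_zero _ (Equiv.swap 0 q) ?_ (Equiv.swap_mul_self 0 q) ?_
      · intro hc
        rw [Equiv.swap_eq_one_iff] at hc
        exact hq0 hc.symm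
      · intro π
        congr 1
        funext t
        rw [Equiv.Perm.mul_apply]
        generalize π t = x
        rcases eq_or_ne x 0 with hx | hx
        · rw [hx, Equiv.swap_apply_left, hfkq, hfk0]
        · rcases eq_or_ne x q with hx2 | hx2
          · rw [hx2, Equiv.swap_apply_right, hfk0, hfkq]
          · rw [Equiv.swap_apply_of_ne_of_ne hx hx2]
    rcases Nat.lt_or_ge b i with hbi | hbi
    · rcases Nat.lt_or_ge b k with hc | hc
      · have hzero := hkey ⟨b + 1, by omega⟩ (by
          intro hcon
          have := congrArg Fin.val hcon
          simp only [Fin.val_mk, Fin.val_zero] at this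
          omega)
          (by
            simp only [hfk, Fin.val_mk]
            rw [if_neg (by omega), if_pos (by omega), if_pos (by omega)]
            congr 1)
        rw [hzero, smul_zero]
      · have hbgt : k < b := by omega
        have hzero := hkey ⟨b, by omega⟩ (by
          intro hcon
          have := congrArg Fin.val hcon
          simp only [Fin.val_mk, Fin.val_zero] at this
          omega)
          (by
            simp only [hfk, Fin.val_mk]
            rw [if_neg (by omega), if_pos (by omega), if_neg (by omega)])
        rw [hzero, smul_zero]
    · rcases le_or_gt b d with hbd | hbd
      · have hev := hpar k hkL hki (by omega) hbd
        have hcast : ((Nat.choose k L : ℕ) : ZMod 2) = 0 := by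
          rw [ZMod.natCast_eq_zero_iff]
          exact hev.two_dvd
        rw [hcast, zero_smul]
      · have hb0 : h b = 0 := hhtop b hbd
        have hzero : (∑ π : Equiv.Perm (Fin (i+1)), ⨂ₜ[ZMod 2] t, fk k (π t)) = 0 := by
          refine Finset.sum_eq_zero fun π _ => ?_
          have hcoord : (fun t => fk k (π t)) (π⁻¹ 0) = 0 := by
            simp only [Equiv.Perm.inv_def, Equiv.apply_symm_apply]
            simp [hfk, ← hb, hb0]
          exact MultilinearMap.map_coord_zero _ (π⁻¹ 0) hcoord
        rw [hzero, smul_zero]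
  have hgw : (∑ π : Equiv.Perm (Fin (i+1)), ⨂ₜ[ZMod 2] t, g (π t))
      = ∑ π : Equiv.Perm (Fin (i+1)), ⨂ₜ[ZMod 2] t, w (π t) := by
    have hcomp : ∀ u : Fin (i+1), g u = w ((finRotate (i+1))⁻¹ u) := by
      intro u
      have hinv : (finRotate (i+1))⁻¹ u = u - 1 := by
        apply Equiv.injective (finRotate (i+1))
        rw [Equiv.Perm.inv_def, Equiv.apply_symm_apply, finRotate_succ_apply]
        exact (sub_add_cancel u 1).symm
      rw [hinv, hg, hw]
      have hval := fin_sub_one_val (by omega : 0 < i) u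
      simp only
      rcases eq_or_ne u.val 0 with h0 | h0
      · rw [if_pos h0, if_pos (by rw [hval, if_pos h0])]
      · rw [if_neg h0, if_neg (by rw [hval, if_neg h0]; omega), hval, if_neg h0]
    have h2 : ∀ π : Equiv.Perm (Fin (i+1)),
        (⨂ₜ[ZMod 2] t, g (π t)) = ⨂ₜ[ZMod 2] t, w (((finRotate (i+1))⁻¹ * π) t) := by
      intro π
      congr 1
      funext t
      rw [Equiv.Perm.mul_apply, ← hcomp]
    rw [Finset.sum_congr rfl fun π _ => h2 π]
    exact sum_perm_relabel (fun π => ⨂ₜ[ZMod 2] t, w (π t)) ((finRotate (i+1))⁻¹)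
  calc _ = (∑ k ∈ Finset.Icc L (i-1), (Nat.choose k L : ZMod 2) •
          ∑ π : Equiv.Perm (Fin (i+1)), ⨂ₜ[ZMod 2] t, fk k (π t)) +
        ∑ π : Equiv.Perm (Fin (i+1)), ⨂ₜ[ZMod 2] t, g (π t) := step1
    _ = ∑ π : Equiv.Perm (Fin (i+1)), ⨂ₜ[ZMod 2] t, w (π t) := by
        rw [Finset.sum_eq_zero hk0, zero_add, hgw]
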